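/- Let N be a nest with an atom E = N₀ − N₀⁻ (N₀ ∈ N, N₀ > N₀⁻). Then the map X ↦ E X restricted to the range of E is an algebra homomorphism from T(N) onto B(E H) whose kernel is the diagonal ideal I⁻_{N₀} = {X ∈ T(N) : E X E = 0}; in particular I⁻_{N₀} is a primitive ideal of T(N). -/

import Mathlib

noncomputable section

universe u

variable {H : Type u} [NormedAddCommGroup H] [InnerProductSpace ℂ H] [CompleteSpace H]
  [TopologicalSpace.SeparableSpace H]

/-- A nest: a linearly ordered set of orthogonal projections containing `0` and `1`. -/
structure Nest (H : Type u) [NormedAddCommGroup H] [InnerProductSpace ℂ H]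
    [CompleteSpace H] where
  carrier : Set (H →L[ℂ] H)
  isProj : ∀ P ∈ carrier, IsSelfAdjoint P ∧ P * P = P
  zero_mem : (0 : H →L[ℂ] H) ∈ carrier
  one_mem : (1 : H →L[ℂ] H) ∈ carrier
  chain : ∀ P ∈ carrier, ∀ Q ∈ carrier, Q * P = P ∨ P * Q = Q

/-- Order on projections: `P ≤ Q` iff `ran P ⊆ ran Q`. -/
def projLE (P Q : H →L[ℂ] H) : Prop := Q * P = P

/-- Strict order on projections. -/
def projLT (P Q : H →L[ℂ] H) : Prop := projLE P Q ∧ P ≠ Q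

/-- The nest algebra: all bounded operators leaving invariant the range of every
projection in the nest, i.e. `(1 - P) X P = 0` for every `P` in the nest. -/
def nestAlgebra (𝒩 : Nest H) : Subalgebra ℂ (H →L[ℂ] H) where
  carrier := {X | ∀ P ∈ 𝒩.carrier, (1 - P) * X * P = 0}
  mul_mem' := by
    intro X Y hX hY P hP
    have hX' := hX P hP
    have hY' := hY P hP
    have hYP : Y * P = P * (Y * P) := by
      have h : (1 - P) * Y * P + P * Y * P = Y * P := by noncomm_ring
      rw [hY', zero_add] at h
      rw [← mul_assoc]; exact h.symm
    calc (1 - P) * (X * Y) * P = (1 - P) * X * (Y * P) := by noncomm_ring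
      _ = (1 - P) * X * (P * (Y * P)) := by rw [← hYP]
      _ = ((1 - P) * X * P) * (Y * P) := by noncomm_ring
      _ = 0 := by rw [hX', zero_mul]
  one_mem' := by
    intro P hP
    have h := (𝒩.isProj P hP).2
    calc (1 - P) * 1 * P = P - P * P := by noncomm_ring
      _ = 0 := by rw [h, sub_self]
  add_mem' := by
    intro X Y hX hY P hP
    have hX' := hX P hP
    have hY' := hY P hP
    calc (1 - P) * (X + Y) * P = (1 - P) * X * P + (1 - P) * Y * P := by noncomm_ring
      _ = 0 := by rw [hX', hY', add_zero]
  zero_mem' := by intro P hP; simp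
  algebraMap_mem' := by
    intro c P hP
    have h := (𝒩.isProj P hP).2
    have h1 : (1 - P) * 1 * P = 0 := by
      calc (1 - P) * 1 * P = P - P * P := by noncomm_ring
        _ = 0 := by rw [h, sub_self]
    calc (1 - P) * (algebraMap ℂ (H →L[ℂ] H) c) * P
        = (1 - P) * (c • (1 : H →L[ℂ] H)) * P := by rw [Algebra.algebraMap_eq_smul_one]
      _ = c • ((1 - P) * 1 * P) := by rw [mul_smul_comm, smul_mul_assoc]
      _ = 0 := by rw [h1, smul_zero]

/-- The diagonal seminorm `i⁻_{N₀}(X) = inf { ‖(N₀-M)X(N₀-M)‖ : M ∈ 𝒩, M < N₀ }`. -/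
def iMinus (𝒩 : Nest H) (N₀ X : H →L[ℂ] H) : ℝ :=
  sInf {r | ∃ M ∈ 𝒩.carrier, projLT M N₀ ∧ r = ‖(N₀ - M) * X * (N₀ - M)‖}

/-- The diagonal seminorm `i⁺_{N₀}(X) = inf { ‖(M-N₀)X(M-N₀)‖ : M ∈ 𝒩, M > N₀ }`. -/
def iPlus (𝒩 : Nest H) (N₀ X : H →L[ℂ] H) : ℝ :=
  sInf {r | ∃ M ∈ 𝒩.carrier, projLT N₀ M ∧ r = ‖(M - N₀) * X * (M - N₀)‖}

/-- A (left) primitive ideal of a unital ring: the kernel of the left regular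
representation on the quotient by a maximal left ideal, i.e. the largest two-sided
ideal `{x | x·R ⊆ L}` contained in a maximal left ideal `L`. -/
def IsLeftPrimitive (R : Type*) [Ring R] (P : Set R) : Prop :=
  ∃ L : Ideal R, L.IsMaximal ∧ P = {x : R | ∀ r : R, x * r ∈ L}

section ringHelpers
variable {A : Type*} [Ring A] {N₀ Nm X Y : A}

private lemma ring_idem (hp₀ : N₀*N₀ = N₀) (hpm : Nm*Nm = Nm) (h1 : N₀*Nm = Nm)
    (h2 : Nm*N₀ = Nm) : (N₀-Nm)*(N₀-Nm) = N₀-Nm := by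
  calc (N₀-Nm)*(N₀-Nm) = N₀*N₀ - N₀*Nm - Nm*N₀ + Nm*Nm := by noncomm_ring
    _ = N₀ - Nm := by rw [hp₀, h1, h2, hpm]; abel

private lemma ring_ENm (hpm : Nm*Nm = Nm) (h1 : N₀*Nm = Nm) : (N₀-Nm)*Nm = 0 := by
  rw [sub_mul, h1, hpm, sub_self]

private lemma ring_EXNm (hpm : Nm*Nm = Nm) (h1 : N₀*Nm = Nm) (hXm : (1-Nm)*X*Nm = 0) :
    (N₀-Nm)*(X*Nm) = 0 := by
  have hx : X*Nm = Nm*(X*Nm) := by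
    have h : (1-Nm)*X*Nm = X*Nm - Nm*(X*Nm) := by noncomm_ring
    rw [hXm] at h; exact sub_eq_zero.mp h.symm
  rw [hx, ← mul_assoc, ring_ENm hpm h1, zero_mul]

private lemma ring_YE (hp₀ : N₀*N₀ = N₀) (h1 : N₀*Nm = Nm) (hY₀ : (1-N₀)*Y*N₀ = 0)
    (hYm : (1-Nm)*Y*Nm = 0) : N₀*(Y*(N₀-Nm)) = Y*(N₀-Nm) := by
  have hy : Y*Nm = Nm*(Y*Nm) := by
    have h : (1-Nm)*Y*Nm = Y*Nm - Nm*(Y*Nm) := by noncomm_ring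
    rw [hYm] at h; exact sub_eq_zero.mp h.symm
  have hNYNm : N₀*(Y*Nm) = Y*Nm := by
    calc N₀*(Y*Nm) = N₀*(Nm*(Y*Nm)) := by rw [← hy]
      _ = (N₀*Nm)*(Y*Nm) := by rw [mul_assoc]
      _ = Nm*(Y*Nm) := by rw [h1]
      _ = Y*Nm := hy.symm
  have hNYN : N₀*(Y*N₀) = Y*N₀ := by
    have h : (1-N₀)*Y*N₀ = Y*N₀ - N₀*(Y*N₀) := by noncomm_ring
    rw [hY₀] at h; exact (sub_eq_zero.mp h.symm).symm
  calc N₀*(Y*(N₀-Nm)) = N₀*(Y*N₀) - N₀*(Y*Nm) := by noncomm_ring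
    _ = Y*N₀ - Y*Nm := by rw [hNYN, hNYNm]
    _ = Y*(N₀-Nm) := by noncomm_ring

private lemma ring_mult (hp₀ : N₀*N₀ = N₀) (hpm : Nm*Nm = Nm) (h1 : N₀*Nm = Nm)
    (h2 : Nm*N₀ = Nm) (hXm : (1-Nm)*X*Nm = 0) (hY₀ : (1-N₀)*Y*N₀ = 0)
    (hYm : (1-Nm)*Y*Nm = 0) :
    (N₀-Nm)*(X*Y)*(N₀-Nm) = ((N₀-Nm)*X*(N₀-Nm))*((N₀-Nm)*Y*(N₀-Nm)) := by
  have e2 := ring_idem hp₀ hpm h1 h2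
  have hyE := ring_YE hp₀ h1 hY₀ hYm
  have hxNm := ring_EXNm hpm h1 hXm (N₀ := N₀)
  calc (N₀-Nm)*(X*Y)*(N₀-Nm)
      = (N₀-Nm)*X*(Y*(N₀-Nm)) := by noncomm_ring
    _ = (N₀-Nm)*X*(N₀*(Y*(N₀-Nm))) := by rw [hyE]
    _ = (N₀-Nm)*X*((N₀-Nm)*(Y*(N₀-Nm))) + ((N₀-Nm)*(X*Nm))*(Y*(N₀-Nm)) := by noncomm_ring
    _ = (N₀-Nm)*X*((N₀-Nm)*(Y*(N₀-Nm))) := by rw [hxNm, zero_mul, add_zero]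
    _ = (N₀-Nm)*X*(((N₀-Nm)*(N₀-Nm))*(Y*(N₀-Nm))) := by rw [e2]
    _ = ((N₀-Nm)*X*(N₀-Nm))*((N₀-Nm)*Y*(N₀-Nm)) := by noncomm_ring

end ringHelpers

private lemma mem_nestAlgebra_iff (𝒩 : Nest H) (X : H →L[ℂ] H) :
    X ∈ nestAlgebra 𝒩 ↔ ∀ P ∈ 𝒩.carrier, (1 - P) * X * P = 0 := Iff.rfl

private lemma nest_swap (𝒩 : Nest H) {P Q : H →L[ℂ] H} (hP : P ∈ 𝒩.carrier)
    (hQ : Q ∈ 𝒩.carrier) (h : P * Q = Q) : Q * P = Q := by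
  have hsP := (𝒩.isProj P hP).1
  have hsQ := (𝒩.isProj Q hQ).1
  have := congrArg star h
  rwa [star_mul, hsP.star_eq, hsQ.star_eq] at this

private lemma memNest (𝒩 : Nest H) {N₀ Nm : H →L[ℂ] H}
    (hN₀ : N₀ ∈ 𝒩.carrier) (hNm : Nm ∈ 𝒩.carrier) (hlt : projLT Nm N₀)
    (hmax : ∀ M ∈ 𝒩.carrier, projLT M N₀ → projLE M Nm)
    (T : H →L[ℂ] H) (hT : T = (N₀ - Nm) * T * (N₀ - Nm)) : T ∈ nestAlgebra 𝒩 := by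
  have hp₀ := (𝒩.isProj N₀ hN₀).2
  have hpm := (𝒩.isProj Nm hNm).2
  have h1 : N₀ * Nm = Nm := hlt.1
  intro P hP
  rcases 𝒩.chain P hP N₀ hN₀ with hPN | hNP
  · -- N₀ * P = P, i.e. P ≤ N₀
    by_cases hPeq : P = N₀
    · subst hPeq
      have h1NE : (1 - P) * (P - Nm) = 0 := by
        calc (1 - P) * (P - Nm) = P - Nm - P*P + P*Nm := by noncomm_ring
          _ = 0 := by rw [hp₀, h1]; abel
      rw [hT]
      calc (1-P) * ((P-Nm)*T*(P-Nm)) * P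
          = ((1-P)*(P-Nm)) * (T*((P-Nm)*P)) := by noncomm_ring
        _ = 0 := by rw [h1NE, zero_mul]
    · have hPm : Nm * P = P := hmax P hP ⟨hPN, hPeq⟩
      have hEP : (N₀ - Nm) * P = 0 := by rw [sub_mul, hPN, hPm, sub_self]
      rw [hT]
      calc (1-P) * ((N₀-Nm)*T*(N₀-Nm)) * P
          = ((1-P)*((N₀-Nm)*T)) * ((N₀-Nm)*P) := by noncomm_ring
        _ = 0 := by rw [hEP, mul_zero]
  · -- P * N₀ = N₀, i.e. N₀ ≤ P
    have hPNm : P * Nm = Nm := by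
      calc P * Nm = P * (N₀ * Nm) := by rw [h1]
        _ = (P * N₀) * Nm := by rw [mul_assoc]
        _ = Nm := by rw [hNP, h1]
    have hPE : (1 - P) * (N₀ - Nm) = 0 := by
      calc (1-P)*(N₀-Nm) = N₀ - Nm - P*N₀ + P*Nm := by noncomm_ring
        _ = 0 := by rw [hNP, hPNm]; abel
    rw [hT]
    calc (1-P) * ((N₀-Nm)*T*(N₀-Nm)) * P
        = ((1-P)*(N₀-Nm)) * (T*((N₀-Nm)*P)) := by noncomm_ring
      _ = 0 := by rw [hPE, zero_mul]

private lemma norm_proj_le_one {E : H →L[ℂ] H} (hsa : star E = E) (hidem : E * E = E) :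
    ‖E‖ ≤ 1 := by
  have hadj : ContinuousLinearMap.adjoint E = E := by
    rw [← ContinuousLinearMap.star_eq_adjoint, hsa]
  apply ContinuousLinearMap.opNorm_le_bound E zero_le_one
  intro x
  rw [one_mul]
  have hEEx : E (E x) = E x := by rw [← ContinuousLinearMap.mul_apply, hidem]
  have h1 : (‖E x‖ : ℝ)^2 = RCLike.re (inner ℂ (E x) (E x) : ℂ) :=
    (inner_self_eq_norm_sq (𝕜 := ℂ) (E x)).symm
  have h2 : (inner ℂ (E x) (E x) : ℂ) = inner ℂ x (E x) := by
    calc (inner ℂ (E x) (E x) : ℂ) = inner ℂ ((ContinuousLinearMap.adjoint E) x) (E x) := by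
          rw [hadj]
      _ = inner ℂ x (E (E x)) := ContinuousLinearMap.adjoint_inner_left _ _ _
      _ = inner ℂ x (E x) := by rw [hEEx]
  have h3 : ‖E x‖^2 ≤ ‖x‖ * ‖E x‖ := by
    rw [h1, h2]
    calc RCLike.re (inner ℂ x (E x) : ℂ) ≤ ‖(inner ℂ x (E x) : ℂ)‖ := RCLike.re_le_norm _
      _ ≤ ‖x‖ * ‖E x‖ := norm_inner_le_norm _ _
  nlinarith [norm_nonneg (E x), norm_nonneg x]

private lemma iMinus_eq (𝒩 : Nest H) {N₀ Nm : H →L[ℂ] H}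
    (hN₀ : N₀ ∈ 𝒩.carrier) (hNm : Nm ∈ 𝒩.carrier) (hlt : projLT Nm N₀)
    (hmax : ∀ M ∈ 𝒩.carrier, projLT M N₀ → projLE M Nm) (X : H →L[ℂ] H) :
    iMinus 𝒩 N₀ X = ‖(N₀ - Nm) * X * (N₀ - Nm)‖ := by
  have hp₀ := (𝒩.isProj N₀ hN₀).2
  have hpm := (𝒩.isProj Nm hNm).2
  have h1 : N₀ * Nm = Nm := hlt.1
  have h2 : Nm * N₀ = Nm := nest_swap 𝒩 hN₀ hNm h1
  have hEsa : star (N₀ - Nm) = N₀ - Nm := by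
    rw [star_sub, (𝒩.isProj N₀ hN₀).1.star_eq, (𝒩.isProj Nm hNm).1.star_eq]
  have hE2 := ring_idem hp₀ hpm h1 h2
  have hE1 : ‖(N₀ - Nm)‖ ≤ 1 := norm_proj_le_one hEsa hE2
  have hlb : ∀ r ∈ {r | ∃ M ∈ 𝒩.carrier, projLT M N₀ ∧ r = ‖(N₀ - M) * X * (N₀ - M)‖},
      ‖(N₀ - Nm) * X * (N₀ - Nm)‖ ≤ r := by
    rintro r ⟨M, hM, hMlt, rfl⟩
    have hM1 : N₀ * M = M := hMlt.1
    have hM2 : M * N₀ = M := nest_swap 𝒩 hN₀ hM hM1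
    have hMm : Nm * M = M := hmax M hM hMlt
    have hMm2 : M * Nm = M := nest_swap 𝒩 hNm hM hMm
    have hl : (N₀ - Nm) * (N₀ - M) = N₀ - Nm := by
      calc (N₀-Nm)*(N₀-M) = N₀*N₀ - N₀*M - Nm*N₀ + Nm*M := by noncomm_ring
        _ = N₀ - Nm := by rw [hp₀, hM1, h2, hMm]; abel
    have hr : (N₀ - M) * (N₀ - Nm) = N₀ - Nm := by
      calc (N₀-M)*(N₀-Nm) = N₀*N₀ - N₀*Nm - M*N₀ + M*Nm := by noncomm_ring
        _ = N₀ - Nm := by rw [hp₀, h1, hM2, hMm2]; abel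
    have heq : (N₀ - Nm) * X * (N₀ - Nm) =
        (N₀ - Nm) * ((N₀ - M) * X * (N₀ - M)) * (N₀ - Nm) := by
      calc (N₀-Nm)*X*(N₀-Nm) = ((N₀-Nm)*(N₀-M))*X*((N₀-M)*(N₀-Nm)) := by rw [hl, hr]
        _ = (N₀-Nm)*((N₀-M)*X*(N₀-M))*(N₀-Nm) := by noncomm_ring
    rw [heq]
    have hb1 : ‖(N₀-Nm) * ((N₀-M)*X*(N₀-M)) * (N₀-Nm)‖ ≤
        ‖(N₀-Nm)‖ * ‖(N₀-M)*X*(N₀-M)‖ * ‖(N₀-Nm)‖ := by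
      calc ‖(N₀-Nm) * ((N₀-M)*X*(N₀-M)) * (N₀-Nm)‖
          ≤ ‖(N₀-Nm) * ((N₀-M)*X*(N₀-M))‖ * ‖(N₀-Nm)‖ := norm_mul_le _ _
        _ ≤ ‖(N₀-Nm)‖ * ‖(N₀-M)*X*(N₀-M)‖ * ‖(N₀-Nm)‖ :=
            mul_le_mul_of_nonneg_right (norm_mul_le _ _) (norm_nonneg _)
    calc ‖(N₀-Nm) * ((N₀-M)*X*(N₀-M)) * (N₀-Nm)‖
        ≤ ‖(N₀-Nm)‖ * ‖(N₀-M)*X*(N₀-M)‖ * ‖(N₀-Nm)‖ := hb1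
      _ ≤ ‖(N₀-M)*X*(N₀-M)‖ * 1 :=
          mul_le_mul (mul_le_of_le_one_left (norm_nonneg _) hE1) hE1 (norm_nonneg _)
            (norm_nonneg _)
      _ = ‖(N₀-M)*X*(N₀-M)‖ := mul_one _
  have hmem : ‖(N₀ - Nm) * X * (N₀ - Nm)‖ ∈
      {r | ∃ M ∈ 𝒩.carrier, projLT M N₀ ∧ r = ‖(N₀ - M) * X * (N₀ - M)‖} :=
    ⟨Nm, hNm, hlt, rfl⟩
  exact le_antisymm (csInf_le ⟨_, hlb⟩ hmem) (le_csInf ⟨_, hmem⟩ hlb)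

private lemma comp_zero_apply (𝒩 : Nest H) {N₀ Nm : H →L[ℂ] H}
    (hN₀ : N₀ ∈ 𝒩.carrier) (hNm : Nm ∈ 𝒩.carrier) (hlt : projLT Nm N₀)
    (X Y : H →L[ℂ] H) (hX : X ∈ nestAlgebra 𝒩) (hY : Y ∈ nestAlgebra 𝒩)
    (u : H) (hu : (N₀ - Nm) u = u) (hYu : (N₀ - Nm) (Y u) = 0) :
    (N₀ - Nm) ((X * Y) u) = 0 := by
  have hp₀ := (𝒩.isProj N₀ hN₀).2
  have hpm := (𝒩.isProj Nm hNm).2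
  have h1 : N₀ * Nm = Nm := hlt.1
  have h2 : Nm * N₀ = Nm := nest_swap 𝒩 hN₀ hNm h1
  have key := ring_mult hp₀ hpm h1 h2 (hX Nm hNm) (hY N₀ hN₀) (hY Nm hNm)
  have happ := congrArg (fun T : H →L[ℂ] H => T u) key
  simp only [ContinuousLinearMap.mul_apply, hu, hYu, map_zero] at happ
  rw [ContinuousLinearMap.mul_apply]
  exact happ

set_option maxHeartbeats 1000000 in
set_option synthInstance.maxHeartbeats 400000 in
theorem statement2 (𝒩 : Nest H) (N₀ Nm : H →L[ℂ] H)
    (hN₀ : N₀ ∈ 𝒩.carrier) (hNm : Nm ∈ 𝒩.carrier) (hlt : projLT Nm N₀)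
    (hmax : ∀ M ∈ 𝒩.carrier, projLT M N₀ → projLE M Nm) :
    (∀ X Y : nestAlgebra 𝒩,
      (N₀ - Nm) * ((X : H →L[ℂ] H) * (Y : H →L[ℂ] H)) * (N₀ - Nm) =
        ((N₀ - Nm) * (X : H →L[ℂ] H) * (N₀ - Nm)) *
          ((N₀ - Nm) * (Y : H →L[ℂ] H) * (N₀ - Nm))) ∧
    (∀ T : H →L[ℂ] H, T = (N₀ - Nm) * T * (N₀ - Nm) →
      ∃ X ∈ nestAlgebra 𝒩, (N₀ - Nm) * X * (N₀ - Nm) = T) ∧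
    ({X : nestAlgebra 𝒩 | (N₀ - Nm) * (X : H →L[ℂ] H) * (N₀ - Nm) = 0} =
      {X : nestAlgebra 𝒩 | iMinus 𝒩 N₀ (X : H →L[ℂ] H) = 0}) ∧
    IsLeftPrimitive (nestAlgebra 𝒩)
      {X : nestAlgebra 𝒩 | iMinus 𝒩 N₀ (X : H →L[ℂ] H) = 0} := by
  have hp₀ := (𝒩.isProj N₀ hN₀).2
  have hpm := (𝒩.isProj Nm hNm).2
  have h1 : N₀ * Nm = Nm := hlt.1
  have h2 : Nm * N₀ = Nm := nest_swap 𝒩 hN₀ hNm h1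
  have hE2 := ring_idem hp₀ hpm h1 h2
  have hEsa : star (N₀ - Nm) = N₀ - Nm := by
    rw [star_sub, (𝒩.isProj N₀ hN₀).1.star_eq, (𝒩.isProj Nm hNm).1.star_eq]
  have hadj : ContinuousLinearMap.adjoint (N₀ - Nm) = N₀ - Nm := by
    rw [← ContinuousLinearMap.star_eq_adjoint, hEsa]
  have hsym : ∀ v u : H, (inner ℂ ((N₀ - Nm) v) u : ℂ) = inner ℂ v ((N₀ - Nm) u) := by
    intro v u
    have h := ContinuousLinearMap.adjoint_inner_left (N₀ - Nm) u v
    rwa [hadj] at h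
  have part1 : ∀ X Y : nestAlgebra 𝒩,
      (N₀ - Nm) * ((X : H →L[ℂ] H) * (Y : H →L[ℂ] H)) * (N₀ - Nm) =
        ((N₀ - Nm) * (X : H →L[ℂ] H) * (N₀ - Nm)) *
          ((N₀ - Nm) * (Y : H →L[ℂ] H) * (N₀ - Nm)) :=
    fun X Y => ring_mult hp₀ hpm h1 h2 (X.2 Nm hNm) (Y.2 N₀ hN₀) (Y.2 Nm hNm)
  have part3 : ({X : nestAlgebra 𝒩 | (N₀ - Nm) * (X : H →L[ℂ] H) * (N₀ - Nm) = 0} =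
      {X : nestAlgebra 𝒩 | iMinus 𝒩 N₀ (X : H →L[ℂ] H) = 0}) := by
    ext X
    simp only [Set.mem_setOf_eq, iMinus_eq 𝒩 hN₀ hNm hlt hmax, norm_eq_zero]
  refine ⟨part1, fun T hT => ⟨T, memNest 𝒩 hN₀ hNm hlt hmax T hT, hT.symm⟩, part3, ?_⟩
  rw [← part3]
  -- pick a unit vector in the range of the atom
  have hEne : (N₀ - Nm) ≠ (0 : H →L[ℂ] H) := fun h => hlt.2 (sub_eq_zero.mp h).symm
  have hx : ∃ x : H, (N₀ - Nm) x ≠ 0 := by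
    by_contra h
    push_neg at h
    exact hEne (ContinuousLinearMap.ext fun x => by
      rw [h x, ContinuousLinearMap.zero_apply])
  obtain ⟨x₀, hx₀⟩ := hx
  set e : H := ((‖(N₀ - Nm) x₀‖ : ℂ))⁻¹ • ((N₀ - Nm) x₀) with he_def
  have hEe : (N₀ - Nm) e = e := by
    rw [he_def, map_smul, ← ContinuousLinearMap.mul_apply, hE2]
  have hnorme : ‖e‖ = 1 := by
    rw [he_def, norm_smul, norm_inv, Complex.norm_real, norm_norm,
      inv_mul_cancel₀ (norm_ne_zero_iff.mpr hx₀)]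
  clear_value e
  have hene : e ≠ 0 := by rw [← norm_ne_zero_iff, hnorme]; exact one_ne_zero
  have hinner : ∀ w : H, (inner ℂ e ((N₀ - Nm) w) : ℂ) = inner ℂ e w := by
    intro w
    rw [← hsym e w, hEe]
  -- the maximal left ideal
  let L : Ideal (nestAlgebra 𝒩) :=
    { carrier := {X : nestAlgebra 𝒩 | (N₀ - Nm) ((X : H →L[ℂ] H) e) = 0}
      add_mem' := by
        intro a b ha hb
        simp only [Set.mem_setOf_eq] at *
        show (N₀ - Nm) (((a : H →L[ℂ] H) + (b : H →L[ℂ] H)) e) = 0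
        rw [ContinuousLinearMap.add_apply, map_add, ha, hb, add_zero]
      zero_mem' := by
        show (N₀ - Nm) (((0 : nestAlgebra 𝒩) : H →L[ℂ] H) e) = 0
        simp
      smul_mem' := by
        intro c x hx
        simp only [Set.mem_setOf_eq, smul_eq_mul] at *
        show (N₀ - Nm) (((c * x : nestAlgebra 𝒩) : H →L[ℂ] H) e) = 0
        rw [MulMemClass.coe_mul]
        exact comp_zero_apply 𝒩 hN₀ hNm hlt _ _ c.2 x.2 e hEe hx }
  have hLmem : ∀ X : nestAlgebra 𝒩,
      X ∈ L ↔ (N₀ - Nm) ((X : H →L[ℂ] H) e) = 0 := fun X => Iff.rfl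
  refine ⟨L, ?_, ?_⟩
  · -- maximality
    refine Ideal.isMaximal_def.mpr ⟨?_, ?_⟩
    · intro hL
      have h1L : (1 : nestAlgebra 𝒩) ∈ L := hL ▸ Submodule.mem_top
      rw [hLmem] at h1L
      rw [OneMemClass.coe_one, ContinuousLinearMap.one_apply, hEe] at h1L
      exact hene h1L
    · intro J hJ
      obtain ⟨X, hXJ, hXL⟩ := SetLike.exists_of_lt hJ
      rw [hLmem] at hXL
      set v : H := (N₀ - Nm) ((X : H →L[ℂ] H) e) with hv_def
      have hEv : (N₀ - Nm) v = v := by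
        rw [hv_def, ← ContinuousLinearMap.mul_apply, hE2]
      clear_value v
      let Y0 : H →L[ℂ] H := ((inner ℂ v v : ℂ))⁻¹ • ((innerSL ℂ v).smulRight e)
      have hY0app : ∀ w, Y0 w = ((inner ℂ v v : ℂ))⁻¹ • ((inner ℂ v w : ℂ) • e) := by
        intro w
        simp only [Y0, ContinuousLinearMap.smul_apply, ContinuousLinearMap.smulRight_apply,
          innerSL_apply_apply]
      have hvC : (inner ℂ v v : ℂ) ≠ 0 := inner_self_ne_zero.mpr hXL
      have hY0v : Y0 v = e := by
        rw [hY0app, smul_smul, inv_mul_cancel₀ hvC, one_smul]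
      have hsymv : ∀ w, (inner ℂ v ((N₀ - Nm) w) : ℂ) = inner ℂ v w := by
        intro w
        rw [← hsym v w, hEv]
      have hY0E : (N₀ - Nm) * Y0 * (N₀ - Nm) = Y0 := by
        ext w
        calc ((N₀ - Nm) * Y0 * (N₀ - Nm)) w = (N₀ - Nm) (Y0 ((N₀ - Nm) w)) := by
              rw [ContinuousLinearMap.mul_apply, ContinuousLinearMap.mul_apply]
          _ = ((inner ℂ v v : ℂ))⁻¹ • ((inner ℂ v ((N₀ - Nm) w) : ℂ) • ((N₀ - Nm) e)) := by
              rw [hY0app, map_smul, map_smul]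
          _ = ((inner ℂ v v : ℂ))⁻¹ • ((inner ℂ v w : ℂ) • e) := by rw [hsymv, hEe]
          _ = Y0 w := (hY0app w).symm
      have hY0mem : Y0 ∈ nestAlgebra 𝒩 := memNest 𝒩 hN₀ hNm hlt hmax Y0 hY0E.symm
      have h5 : Y0 ((X : H →L[ℂ] H) e) = e := by
        conv_lhs => rw [← hY0E]
        rw [ContinuousLinearMap.mul_apply, ContinuousLinearMap.mul_apply]
        rw [← hv_def, hY0v, hEe]
      have hYX : (⟨Y0, hY0mem⟩ : nestAlgebra 𝒩) * X ∈ J := Ideal.mul_mem_left J _ hXJ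
      have hsub : (1 : nestAlgebra 𝒩) - ⟨Y0, hY0mem⟩ * X ∈ L := by
        rw [hLmem]
        simp only [AddSubgroupClass.coe_sub, OneMemClass.coe_one, MulMemClass.coe_mul,
          ContinuousLinearMap.sub_apply, ContinuousLinearMap.one_apply,
          ContinuousLinearMap.mul_apply, h5, sub_self, map_zero]
      have h1J : (1 : nestAlgebra 𝒩) ∈ J := by
        have := J.add_mem ((le_of_lt hJ) hsub) hYX
        simpa using this
      exact (Ideal.eq_top_iff_one J).mpr h1J
  · -- the kernel is the annihilator of the simple module
    ext x
    simp only [Set.mem_setOf_eq]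
    constructor
    · intro hx r
      rw [hLmem, MulMemClass.coe_mul]
      have key := part1 x r
      rw [hx, zero_mul] at key
      have happ := congrArg (fun T : H →L[ℂ] H => T e) key
      simp only [ContinuousLinearMap.mul_apply, hEe, ContinuousLinearMap.zero_apply] at happ
      rw [ContinuousLinearMap.mul_apply]
      exact happ
    · intro hx
      ext u
      let r0 : H →L[ℂ] H := (innerSL ℂ e).smulRight ((N₀ - Nm) u)
      have hr0app : ∀ w, r0 w = (inner ℂ e w : ℂ) • ((N₀ - Nm) u) := by
        intro w
        simp only [r0, ContinuousLinearMap.smulRight_apply, innerSL_apply_apply]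
      have hEEu : (N₀ - Nm) ((N₀ - Nm) u) = (N₀ - Nm) u := by
        rw [← ContinuousLinearMap.mul_apply, hE2]
      have hr0E : (N₀ - Nm) * r0 * (N₀ - Nm) = r0 := by
        ext w
        calc ((N₀ - Nm) * r0 * (N₀ - Nm)) w = (N₀ - Nm) (r0 ((N₀ - Nm) w)) := by
              rw [ContinuousLinearMap.mul_apply, ContinuousLinearMap.mul_apply]
          _ = (inner ℂ e ((N₀ - Nm) w) : ℂ) • ((N₀ - Nm) ((N₀ - Nm) u)) := by
              rw [hr0app, map_smul]
          _ = (inner ℂ e w : ℂ) • ((N₀ - Nm) u) := by rw [hinner, hEEu]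
          _ = r0 w := (hr0app w).symm
      have hr0mem : r0 ∈ nestAlgebra 𝒩 := memNest 𝒩 hN₀ hNm hlt hmax r0 hr0E.symm
      have hre : r0 e = (N₀ - Nm) u := by
        rw [hr0app]
        have hone : (inner ℂ e e : ℂ) = 1 := by
          rw [inner_self_eq_norm_sq_to_K, hnorme]; norm_num
        rw [hone, one_smul]
      have hmem := hx ⟨r0, hr0mem⟩
      rw [hLmem, MulMemClass.coe_mul] at hmem
      rw [ContinuousLinearMap.mul_apply, hre] at hmem
      simp only [ContinuousLinearMap.mul_apply, ContinuousLinearMap.zero_apply]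
      exact hmem
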